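/- Let P be a probability measure on ℝ^m with finite second moment, A a measurable set with P(A) = 1 − ε ∈ (0,1], x₀ ∈ A, and R_A := sup_{x∈A} ‖x − x₀‖. Then W₂(P, P(·|A)) ≤ (E[‖X − x₀‖² 1_{A^c}])^{1/2} + R_A √ε, where X ∼ P and P(·|A) is the conditional law of P on A. -/

import Mathlib

open MeasureTheory

/-- 2-Wasserstein distance (Euclidean cost), as the infimum over couplings with
integrable quadratic cost. -/
noncomputable def W2 {E : Type*} [NormedAddCommGroup E] [MeasurableSpace E]
    (P Q : Measure E) : ℝ :=
  Real.sqrt (sInf {c : ℝ | ∃ π : Measure (E × E),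
    π.map Prod.fst = P ∧ π.map Prod.snd = Q ∧
    Integrable (fun p => ‖p.1 - p.2‖ ^ 2) π ∧
    c = ∫ p, ‖p.1 - p.2‖ ^ 2 ∂π})

abbrev Es (m : ℕ) := EuclideanSpace ℝ (Fin m)

theorem stmt10 {m : ℕ} (P : Measure (EuclideanSpace ℝ (Fin m))) [IsProbabilityMeasure P]
    (hP2 : Integrable (fun x => ‖x‖ ^ 2) P)
    (A : Set (EuclideanSpace ℝ (Fin m))) (hA : MeasurableSet A)
    (ε : ℝ) (hε0 : 0 ≤ ε) (hε1 : ε < 1) (hPA : P A = ENNReal.ofReal (1 - ε))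
    (x₀ : EuclideanSpace ℝ (Fin m)) (hx₀ : x₀ ∈ A)
    (RA : ℝ) (hRA : ∀ x ∈ A, ‖x - x₀‖ ≤ RA) :
    W2 P (ProbabilityTheory.cond P A) ≤
      Real.sqrt (∫ x in Aᶜ, ‖x - x₀‖ ^ 2 ∂P) + RA * Real.sqrt ε := by
  classical
  have h1ε : (0:ℝ) < 1 - ε := by linarith
  have hRA0 : 0 ≤ RA := by simpa using hRA x₀ hx₀
  have hPA0 : P A ≠ 0 := by
    rw [hPA]; simp only [ne_eq, ENNReal.ofReal_eq_zero, not_le]; linarith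
  have hPAtop : P A ≠ ⊤ := by rw [hPA]; exact ENNReal.ofReal_ne_top
  set Q := ProbabilityTheory.cond P A with hQdef
  haveI hQprob : IsProbabilityMeasure Q := ProbabilityTheory.cond_isProbabilityMeasure hPA0
  have hPAc : P Aᶜ = ENNReal.ofReal ε := by
    rw [measure_compl hA (measure_ne_top _ _), measure_univ, hPA,
      ← ENNReal.ofReal_one, ← ENNReal.ofReal_sub _ h1ε.le]
    norm_num
  set μ' := P.restrict Aᶜ with hμ'
  set D := (P.restrict A).map (fun x => (x, x)) with hD
  set ρ := μ'.prod Q with hρ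
  set π := D + ρ with hπ
  have hdiag : Measurable (fun x : Es m => (x, x)) := measurable_id.prodMk measurable_id
  -- marginals
  have hfst : π.map Prod.fst = P := by
    rw [hπ, Measure.map_add _ _ measurable_fst, hD,
      Measure.map_map measurable_fst hdiag, hρ, Measure.map_fst_prod]
    have h1 : (Prod.fst ∘ fun x : Es m => (x, x)) = id := rfl
    rw [h1, Measure.map_id, measure_univ, one_smul, hμ',
      Measure.restrict_add_restrict_compl hA]
  have hsmul : P A • Q = P.restrict A := by
    rw [hQdef, ProbabilityTheory.cond, smul_smul, ENNReal.mul_inv_cancel hPA0 hPAtop, one_smul]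
  have hsnd : π.map Prod.snd = Q := by
    rw [hπ, Measure.map_add _ _ measurable_snd, hD,
      Measure.map_map measurable_snd hdiag, hρ, Measure.map_snd_prod]
    have h1 : (Prod.snd ∘ fun x : Es m => (x, x)) = id := rfl
    rw [h1, Measure.map_id, hμ', Measure.restrict_apply_univ, hPAc, ← hsmul, hPA,
      ← add_smul, ← ENNReal.ofReal_add h1ε.le hε0]
    norm_num
  -- integrability of second moments
  have hcont_f : Continuous (fun x : Es m => ‖x - x₀‖) :=
    (continuous_id.sub continuous_const).norm
  have hf2P : Integrable (fun x : Es m => ‖x - x₀‖ ^ 2) P := by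
    have hb : Integrable (fun x : Es m => 2 * ‖x‖ ^ 2 + 2 * ‖x₀‖ ^ 2) P :=
      (hP2.const_mul 2).add (integrable_const _)
    refine hb.mono' ((hcont_f.pow 2).aestronglyMeasurable) (Filter.Eventually.of_forall fun x => ?_)
    rw [Real.norm_eq_abs, abs_of_nonneg (by positivity)]
    have h1 : ‖x - x₀‖ ≤ ‖x‖ + ‖x₀‖ := norm_sub_le x x₀
    nlinarith [h1, norm_nonneg (x - x₀), norm_nonneg x, norm_nonneg x₀, sq_nonneg (‖x‖ - ‖x₀‖)]
  have hf2μ' : Integrable (fun x : Es m => ‖x - x₀‖ ^ 2) μ' := hf2P.restrict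
  have hfmem2 : MemLp (fun x : Es m => ‖x - x₀‖) 2 μ' :=
    (memLp_two_iff_integrable_sq hcont_f.aestronglyMeasurable).2 hf2μ'
  have hfμ' : Integrable (fun x : Es m => ‖x - x₀‖) μ' :=
    hfmem2.integrable one_le_two
  -- Q is supported on A
  have hQA : ∀ᵐ y ∂Q, y ∈ A := by
    have hQAc : Q Aᶜ = 0 := by
      rw [hQdef, ProbabilityTheory.cond_apply hA]
      simp
    rw [ae_iff]
    exact hQAc
  have hgbd : ∀ᵐ y ∂Q, ‖y - x₀‖ ≤ RA := hQA.mono fun y hy => hRA y hy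
  have hgQ : Integrable (fun y : Es m => ‖y - x₀‖) Q :=
    (integrable_const RA).mono' hcont_f.aestronglyMeasurable
      (hgbd.mono fun y hy => by rwa [Real.norm_eq_abs, abs_of_nonneg (norm_nonneg _)])
  have hg2Q : Integrable (fun y : Es m => ‖y - x₀‖ ^ 2) Q :=
    (integrable_const (RA ^ 2)).mono' ((hcont_f.pow 2).aestronglyMeasurable)
      (hgbd.mono fun y hy => by
        rw [Real.norm_eq_abs, abs_of_nonneg (by positivity)]
        exact pow_le_pow_left₀ (norm_nonneg _) hy 2)
  -- cost function
  have hcostcont : Continuous (fun p : Es m × Es m => ‖p.1 - p.2‖ ^ 2) :=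
    ((continuous_fst.sub continuous_snd).norm).pow 2
  have hcostD : Integrable (fun p : Es m × Es m => ‖p.1 - p.2‖ ^ 2) D := by
    rw [hD, integrable_map_measure hcostcont.aestronglyMeasurable hdiag.aemeasurable]
    have h1 : ((fun p : Es m × Es m => ‖p.1 - p.2‖ ^ 2) ∘ fun x : Es m => (x, x)) =
        fun _ : Es m => (0:ℝ) := by
      funext x; simp
    rw [h1]
    exact integrable_const 0
  have hFint : Integrable (fun p : Es m × Es m => (‖p.1 - x₀‖ + ‖p.2 - x₀‖) ^ 2) ρ := by
    have h1 := Integrable.mul_prod (ν := Q) hf2μ' (integrable_const (1:ℝ))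
    have h2 := (Integrable.mul_prod (ν := Q) hfμ' hgQ).const_mul 2
    have h3 := Integrable.mul_prod (μ := μ') (integrable_const (1:ℝ)) hg2Q
    refine ((h1.add h2).add h3).congr (Filter.Eventually.of_forall fun p => ?_)
    simp only [Pi.add_apply]
    ring
  have hcost_le : ∀ p : Es m × Es m, ‖p.1 - p.2‖ ^ 2 ≤ (‖p.1 - x₀‖ + ‖p.2 - x₀‖) ^ 2 := by
    intro p
    have h1 : ‖p.1 - p.2‖ ≤ ‖p.1 - x₀‖ + ‖p.2 - x₀‖ := by
      calc ‖p.1 - p.2‖ = ‖(p.1 - x₀) - (p.2 - x₀)‖ := by rw [sub_sub_sub_cancel_right]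
        _ ≤ ‖p.1 - x₀‖ + ‖p.2 - x₀‖ := norm_sub_le _ _
    exact pow_le_pow_left₀ (norm_nonneg _) h1 2
  have hcostρ : Integrable (fun p : Es m × Es m => ‖p.1 - p.2‖ ^ 2) ρ := by
    refine hFint.mono' hcostcont.aestronglyMeasurable
      (Filter.Eventually.of_forall fun p => ?_)
    rw [Real.norm_eq_abs, abs_of_nonneg (by positivity)]
    exact hcost_le p
  have hcostπ : Integrable (fun p : Es m × Es m => ‖p.1 - p.2‖ ^ 2) π :=
    hcostD.add_measure hcostρ
  -- value of the integral
  have hintD : ∫ p, ‖p.1 - p.2‖ ^ 2 ∂D = 0 := by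
    rw [hD, integral_map hdiag.aemeasurable hcostcont.aestronglyMeasurable]
    simp
  have hintπ : ∫ p, ‖p.1 - p.2‖ ^ 2 ∂π = ∫ p, ‖p.1 - p.2‖ ^ 2 ∂ρ := by
    rw [hπ, integral_add_measure hcostD hcostρ, hintD, zero_add]
  set S := ∫ x in Aᶜ, ‖x - x₀‖ ^ 2 ∂P with hSdef
  have hS0 : 0 ≤ S := integral_nonneg fun x => by positivity
  have hμ'univ : (μ' Set.univ).toReal = ε := by
    rw [hμ', Measure.restrict_apply_univ, hPAc, ENNReal.toReal_ofReal hε0]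
  -- Cauchy-Schwarz on μ'
  have hCS : ∫ x, ‖x - x₀‖ ∂μ' ≤ Real.sqrt S * Real.sqrt ε := by
    have hpq : Real.HolderConjugate 2 2 := Real.holderConjugate_iff.mpr ⟨one_lt_two, by norm_num⟩
    have h := integral_mul_le_Lp_mul_Lq_of_nonneg hpq
      (f := fun x : Es m => ‖x - x₀‖) (g := fun _ : Es m => (1:ℝ)) (μ := μ')
      (Filter.Eventually.of_forall fun x => norm_nonneg _)
      (Filter.Eventually.of_forall fun _ => zero_le_one)
      (by simpa [ENNReal.ofReal_ofNat] using hfmem2)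
      (by simpa [ENNReal.ofReal_ofNat] using (memLp_const (1:ℝ) (μ := μ') (p := 2)))
    simp only [mul_one] at h
    refine h.trans_eq ?_
    have h2 : ∀ x : Es m, ‖x - x₀‖ ^ (2:ℝ) = ‖x - x₀‖ ^ (2:ℕ) := fun x => by
      rw [show ((2:ℝ) = ((2:ℕ):ℝ)) by norm_num, Real.rpow_natCast]
    rw [integral_congr_ae (Filter.Eventually.of_forall fun x => h2 x)]
    have h3 : ∫ _ : Es m, (1:ℝ) ^ (2:ℝ) ∂μ' = ε := by
      simp only [Real.one_rpow, integral_const, smul_eq_mul, mul_one, measureReal_def, hμ'univ]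
    rw [h3, Real.sqrt_eq_rpow, Real.sqrt_eq_rpow]
  have hf_nonneg : 0 ≤ ∫ x, ‖x - x₀‖ ∂μ' := integral_nonneg fun x => norm_nonneg _
  have hgQ_le : ∫ y, ‖y - x₀‖ ∂Q ≤ RA := by
    have := integral_mono_ae hgQ (integrable_const RA) hgbd
    simpa using this
  have hgQ_nonneg : 0 ≤ ∫ y, ‖y - x₀‖ ∂Q := integral_nonneg fun y => norm_nonneg _
  have hg2Q_le : ∫ y, ‖y - x₀‖ ^ 2 ∂Q ≤ RA ^ 2 := by
    have hb : ∀ᵐ y ∂Q, ‖y - x₀‖ ^ 2 ≤ RA ^ 2 :=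
      hgbd.mono fun y hy => pow_le_pow_left₀ (norm_nonneg _) hy 2
    have := integral_mono_ae hg2Q (integrable_const (RA ^ 2)) hb
    simpa using this
  -- main bound
  set T := Real.sqrt S + RA * Real.sqrt ε with hTdef
  have hT0 : 0 ≤ T := by positivity
  have hρ_le : ∫ p, ‖p.1 - p.2‖ ^ 2 ∂ρ ≤ T ^ 2 := by
    have hmono : ∫ p, ‖p.1 - p.2‖ ^ 2 ∂ρ ≤ ∫ p, (‖p.1 - x₀‖ + ‖p.2 - x₀‖) ^ 2 ∂ρ :=
      integral_mono hcostρ hFint hcost_le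
    have hexp : ∫ p, (‖p.1 - x₀‖ + ‖p.2 - x₀‖) ^ 2 ∂ρ =
        S * 1 + 2 * ((∫ x, ‖x - x₀‖ ∂μ') * ∫ y, ‖y - x₀‖ ∂Q) +
          ε * ∫ y, ‖y - x₀‖ ^ 2 ∂Q := by
      have h1 : Integrable (fun p : Es m × Es m => ‖p.1 - x₀‖ ^ 2 * 1) ρ := by
        rw [hρ]; exact Integrable.mul_prod (ν := Q) hf2μ' (integrable_const (1:ℝ))
      have h2 : Integrable (fun p : Es m × Es m => (2 * ‖p.1 - x₀‖) * ‖p.2 - x₀‖) ρ := by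
        rw [hρ]; exact Integrable.mul_prod (ν := Q) (hfμ'.const_mul 2) hgQ
      have h3 : Integrable (fun p : Es m × Es m => (1:ℝ) * ‖p.2 - x₀‖ ^ 2) ρ := by
        rw [hρ]; exact Integrable.mul_prod (μ := μ') (integrable_const (1:ℝ)) hg2Q
      have h12 : Integrable (fun p : Es m × Es m =>
          ‖p.1 - x₀‖ ^ 2 * 1 + (2 * ‖p.1 - x₀‖) * ‖p.2 - x₀‖) ρ := h1.add h2
      have e0 : ∫ p, (‖p.1 - x₀‖ + ‖p.2 - x₀‖) ^ 2 ∂ρ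
          = ∫ p, (‖p.1 - x₀‖ ^ 2 * 1 + (2 * ‖p.1 - x₀‖) * ‖p.2 - x₀‖)
              + (1:ℝ) * ‖p.2 - x₀‖ ^ 2 ∂ρ :=
        integral_congr_ae (Filter.Eventually.of_forall fun p => by ring)
      rw [e0, integral_add h12 h3, integral_add h1 h2, hρ,
        integral_prod_mul (fun x : Es m => ‖x - x₀‖ ^ 2) (fun _ : Es m => (1:ℝ)),
        integral_prod_mul (fun x : Es m => 2 * ‖x - x₀‖) (fun y : Es m => ‖y - x₀‖),
        integral_prod_mul (fun _ : Es m => (1:ℝ)) (fun y : Es m => ‖y - x₀‖ ^ 2)]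
      simp only [integral_const, smul_eq_mul, mul_one, measureReal_def, measure_univ, ENNReal.toReal_one,
        one_mul, hμ'univ, integral_const_mul]
      ring
    have hsq : Real.sqrt S ^ 2 = S := Real.sq_sqrt hS0
    have hsqε : Real.sqrt ε ^ 2 = ε := Real.sq_sqrt hε0
    have hsqS0 := Real.sqrt_nonneg S
    have hsqε0 := Real.sqrt_nonneg ε
    calc ∫ p, ‖p.1 - p.2‖ ^ 2 ∂ρ ≤ _ := hmono
      _ = _ := hexp
      _ ≤ T ^ 2 := by
        rw [hTdef]
        nlinarith [mul_le_mul hCS hgQ_le hgQ_nonneg (by positivity : (0:ℝ) ≤ Real.sqrt S * Real.sqrt ε)]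
  -- conclude
  have hmem : (∫ p, ‖p.1 - p.2‖ ^ 2 ∂π) ∈ {c : ℝ | ∃ π : Measure (Es m × Es m),
      π.map Prod.fst = P ∧ π.map Prod.snd = Q ∧
      Integrable (fun p => ‖p.1 - p.2‖ ^ 2) π ∧
      c = ∫ p, ‖p.1 - p.2‖ ^ 2 ∂π} := ⟨π, hfst, hsnd, hcostπ, rfl⟩
  have hbdd : BddBelow {c : ℝ | ∃ π : Measure (Es m × Es m),
      π.map Prod.fst = P ∧ π.map Prod.snd = Q ∧
      Integrable (fun p => ‖p.1 - p.2‖ ^ 2) π ∧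
      c = ∫ p, ‖p.1 - p.2‖ ^ 2 ∂π} := by
    refine ⟨0, fun c hc => ?_⟩
    obtain ⟨π', -, -, -, hc⟩ := hc
    rw [hc]
    exact integral_nonneg fun p => by positivity
  have hsInf := csInf_le hbdd hmem
  rw [W2]
  calc Real.sqrt _ ≤ Real.sqrt (∫ p, ‖p.1 - p.2‖ ^ 2 ∂π) := Real.sqrt_le_sqrt hsInf
    _ ≤ T := by
      rw [hintπ]
      calc Real.sqrt (∫ p, ‖p.1 - p.2‖ ^ 2 ∂ρ) ≤ Real.sqrt (T ^ 2) :=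
            Real.sqrt_le_sqrt hρ_le
        _ = T := Real.sqrt_sq hT0
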